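/- Let x, y, z ∈ X ∪ {0}, let (◁₁,c₁) and (◁₂,c₂) be weights, and let (◁,c) = (◁₁,c₁) + (◁₂,c₂) be their sum. For every valuation v, if v ⊨ y - x ◁₁ c₁ and v ⊨ z - y ◁₂ c₂, then v ⊨ z - x ◁ c. -/

import Mathlib

noncomputable section

open Classical

attribute [local instance] Classical.propDecidable

namespace GTA

/-- A comparison operator: strict `<` or non-strict `≤`. -/
inductive Cmp where
  | lt : Cmp
  | le : Cmp
deriving DecidableEq

/-- `Cmp.holds ◁ a b` means `a ◁ b` in `ℝ̄ = EReal`. -/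
def Cmp.holds : Cmp → EReal → EReal → Prop
  | .lt, a, b => a < b
  | .le, a, b => a ≤ b

/-- Extended addition on `ℝ̄`: `(+∞) + α = α + (+∞) = +∞` for all `α`,
and `(-∞) + β = β + (-∞) = -∞` for `β ≠ +∞`. -/
def eadd (a b : EReal) : EReal := if a = ⊤ ∨ b = ⊤ then ⊤ else a + b

/-- Extended subtraction `β - α := β + (-α)`. -/
def esub (a b : EReal) : EReal := eadd a (-b)

/-- Constants of atomic constraints: elements of `ℤ ∪ {-∞, +∞}`. -/
inductive EConst where
  | ninf : EConst
  | int : ℤ → EConst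
  | pinf : EConst
deriving DecidableEq

def EConst.toEReal : EConst → EReal
  | .ninf => ⊥
  | .int k => ((k : ℝ) : EReal)
  | .pinf => ⊤

variable {C : Type*}

/-- A valuation over the clock set `C` (vertices `Option C`, where `none` is the
special clock `0`), with future clocks `XF` and history clocks the complement of `XF`:
`v 0 = 0`, history clocks take values in `[0, +∞]`, future clocks in `[-∞, 0]`. -/
structure Val (C : Type*) (XF : Set C) where
  toFun : Option C → EReal
  zero' : toFun none = 0
  hist' : ∀ x : C, x ∉ XF → 0 ≤ toFun (some x)
  fut' : ∀ x : C, x ∈ XF → toFun (some x) ≤ 0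

/-- Shift of a clock map by a real delay `δ`: every clock in `X` increases by `δ`,
the special clock `0` keeps value `0`. -/
def shift (u : Option C → EReal) (δ : ℝ) : Option C → EReal
  | none => 0
  | some x => eadd (u (some x)) ((δ : ℝ) : EReal)

/-- An atomic constraint `y - x ◁ c` with `x, y ∈ X ∪ {0}` and `c ∈ ℤ ∪ {-∞,+∞}`. -/
structure Atom (C : Type*) where
  y : Option C
  x : Option C
  cmp : Cmp
  c : EConst

/-- Satisfaction `u ⊨ y - x ◁ c`, i.e. `u(y) - u(x) ◁ c` with extended subtraction. -/
def asat (u : Option C → EReal) (φ : Atom C) : Prop :=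
  φ.cmp.holds (esub (u φ.y) (u φ.x)) φ.c.toEReal

/-- The simulation preorder `≼_G` on clock maps: for every `φ ∈ G` and every real
`δ ≥ 0`, `u + δ ⊨ φ` implies `u' + δ ⊨ φ`. -/
def simLeFun (G : Set (Atom C)) (u u' : Option C → EReal) : Prop :=
  ∀ φ ∈ G, ∀ δ : ℝ, 0 ≤ δ → asat (shift u δ) φ → asat (shift u' δ) φ

/-- `v ≼_G v'` on valuations. -/
def simLe (XF : Set C) (G : Set (Atom C)) (v v' : Val C XF) : Prop :=
  simLeFun G v.toFun v'.toFun

/-- `v' ∈ [R]v`: history clocks in `R` are reset to `0`, future clocks in `R` are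
released (any value in `[-∞,0]`, automatic for valuations), other clocks unchanged. -/
def releaseRel (XF : Set C) (R : Set C) (v v' : Val C XF) : Prop :=
  (∀ x ∈ R, x ∉ XF → v'.toFun (some x) = 0) ∧
  ∀ x : C, x ∉ R → v'.toFun (some x) = v.toFun (some x)

/-- `[R]Z`. -/
def changeSet (XF : Set C) (R : Set C) (Z : Set (Val C XF)) : Set (Val C XF) :=
  { v' | ∃ v ∈ Z, releaseRel XF R v v' }

/-- Time elapse `↑Z = {v + δ : v ∈ Z, δ ≥ 0, (v+δ)(x) ≤ 0 for all future x}`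
(the latter condition is automatic since elements are valuations). -/
def elapseSet (XF : Set C) (Z : Set (Val C XF)) : Set (Val C XF) :=
  { w | ∃ v ∈ Z, ∃ δ : ℝ, 0 ≤ δ ∧ w.toFun = shift v.toFun δ }

/-- Membership of a vertex in a set of clocks (the clock `0` is in no such set). -/
def inR (R : Set C) : Option C → Prop
  | none => False
  | some x => x ∈ R

/-- `pre([R])(G)`. -/
def preChange (R : Set C) (G : Set (Atom C)) : Set (Atom C) :=
  { ψ | ∃ φ ∈ G,
      (¬ inR R φ.x ∧ ¬ inR R φ.y ∧ ψ = φ) ∨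
      (inR R φ.x ∧ ¬ inR R φ.y ∧ ψ = { φ with x := none }) ∨
      (¬ inR R φ.x ∧ inR R φ.y ∧ ψ = { φ with y := none }) }

/-- Instantaneous timed programs: guards (finite conjunctions of atomic constraints),
changes `[R]`, and sequential composition. -/
inductive Prog (C : Type*) where
  | guard : List (Atom C) → Prog C
  | change : Set C → Prog C
  | seq : Prog C → Prog C → Prog C

/-- Semantics `v →prog v'` of programs. -/
def Prog.steps (XF : Set C) : Prog C → Val C XF → Val C XF → Prop
  | .guard g, v, v' => (∀ φ ∈ g, asat v.toFun φ) ∧ v' = v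
  | .change R, v, v' => releaseRel XF R v v'
  | .seq p q, v, v' => ∃ u, Prog.steps XF p v u ∧ Prog.steps XF q u v'

/-- `pre(prog)(G)`. -/
def Prog.pre : Prog C → Set (Atom C) → Set (Atom C)
  | .guard g, G => { φ | φ ∈ g } ∪ G
  | .change R, G => preChange R G
  | .seq p q, G => Prog.pre p (Prog.pre q G)

/-- A weight `(◁, c)` with `c ∈ ℝ̄`. -/
structure Weight where
  cmp : Cmp
  c : EReal

/-- Strict order on weights. -/
def Weight.lt (w w' : Weight) : Prop :=
  w.c < w'.c ∨ (w.c = w'.c ∧ w.cmp = Cmp.lt ∧ w'.cmp = Cmp.le)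

/-- Non-strict order on weights. -/
def Weight.le (w w' : Weight) : Prop := Weight.lt w w' ∨ w = w'

/-- Sum of weights. -/
def Weight.add (w w' : Weight) : Weight :=
  if w = ⟨Cmp.lt, ⊥⟩ ∨ w' = ⟨Cmp.lt, ⊥⟩ then ⟨Cmp.lt, ⊥⟩
  else if w = ⟨Cmp.le, ⊤⟩ ∨ w' = ⟨Cmp.le, ⊤⟩ then ⟨Cmp.le, ⊤⟩
  else if w = ⟨Cmp.le, ⊥⟩ ∨ w' = ⟨Cmp.le, ⊥⟩ then ⟨Cmp.le, ⊥⟩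
  else if w = ⟨Cmp.lt, ⊤⟩ ∨ w' = ⟨Cmp.lt, ⊤⟩ then ⟨Cmp.lt, ⊤⟩
  else ⟨if w.cmp = Cmp.le ∧ w'.cmp = Cmp.le then Cmp.le else Cmp.lt, w.c + w'.c⟩

/-- Minimum of two weights. -/
def Weight.min (w w' : Weight) : Weight := if Weight.le w w' then w else w'

/-- A weight `(◁, c)` is finite if `c ∈ ℝ`. -/
def Weight.Finite (w : Weight) : Prop := w.c ≠ ⊥ ∧ w.c ≠ ⊤

/-- A distance graph: a weight on each ordered pair of distinct vertices of
`X ∪ {0}`; self-loops carry the trivial weight `(≤, +∞)`. -/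
structure DGraph (C : Type*) where
  w : Option C → Option C → Weight
  refl' : ∀ a : Option C, w a a = ⟨Cmp.le, ⊤⟩

namespace DGraph

/-- A well-formed distance graph has no edge of weight `(<, -∞)`. -/
def WF (G : DGraph C) : Prop := ∀ a b, G.w a b ≠ ⟨Cmp.lt, ⊥⟩

/-- The semantics `⟦𝔾⟧` of a distance graph. -/
def sem (G : DGraph C) (XF : Set C) : Set (Val C XF) :=
  { v | ∀ a b : Option C, (G.w a b).cmp.holds (esub (v.toFun b) (v.toFun a)) (G.w a b).c }

/-- Weight of the path `a₀ → a₁ → ⋯ → aₙ` given as the list `[a₀, …, aₙ]`. -/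
def chainWeight (G : DGraph C) : List (Option C) → Weight
  | a :: b :: l => Weight.add (G.w a b) (G.chainWeight (b :: l))
  | _ => ⟨Cmp.le, 0⟩

end DGraph

/-- `l` is a path from `a` to `b`: at least one edge, consecutive vertices distinct. -/
def IsPath (l : List (Option C)) (a b : Option C) : Prop :=
  2 ≤ l.length ∧ l.head? = some a ∧ l.getLast? = some b ∧ l.Chain' (· ≠ ·)

namespace DGraph

/-- `𝔾` has a negative cycle: a cycle of weight strictly less than `(≤, 0)`. -/
def HasNegCycle (G : DGraph C) : Prop :=
  ∃ (a : Option C) (l : List (Option C)),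
    IsPath l a a ∧ Weight.lt (G.chainWeight l) ⟨Cmp.le, 0⟩

/-- `𝔾` is in standard form. -/
def Standard (G : DGraph C) (XF : Set C) : Prop :=
  (∀ x ∈ XF, Weight.le (G.w none (some x)) ⟨Cmp.le, 0⟩) ∧
  (∀ x : C, x ∉ XF → Weight.le (G.w (some x) none) ⟨Cmp.le, 0⟩) ∧
  (∀ x y : C, G.w (some x) (some y) ≠ ⟨Cmp.le, ⊤⟩ →
    G.w (some x) none ≠ ⟨Cmp.le, ⊤⟩ ∧ G.w none (some y) ≠ ⟨Cmp.le, ⊤⟩)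

/-- `𝔾` is normalized: standard form, no negative cycle, and every edge weight is
minimal among the weights of paths between its endpoints. -/
def Normalized (G : DGraph C) (XF : Set C) : Prop :=
  G.Standard XF ∧ ¬ G.HasNegCycle ∧
  ∀ (a b : Option C) (l : List (Option C)), a ≠ b → IsPath l a b →
    Weight.le (G.w a b) (G.chainWeight l)

/-- Weight function of the standardization of `𝔾`. -/
def stdW (G : DGraph C) (XF : Set C) : Option C → Option C → Weight
  | none, some y =>
      if y ∈ XF then Weight.min (G.w none (some y)) ⟨Cmp.le, 0⟩
      else if ∃ a : Option C, a ≠ some y ∧ G.w a (some y) ≠ ⟨Cmp.le, ⊤⟩ then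
        Weight.min (G.w none (some y)) ⟨Cmp.lt, ⊤⟩
      else G.w none (some y)
  | some x, none =>
      if x ∈ XF then
        (if ∃ b : Option C, b ≠ some x ∧ G.w (some x) b ≠ ⟨Cmp.le, ⊤⟩ then
          Weight.min (G.w (some x) none) ⟨Cmp.lt, ⊤⟩
        else G.w (some x) none)
      else Weight.min (G.w (some x) none) ⟨Cmp.le, 0⟩
  | a, b => G.w a b

/-- The standardization of a distance graph. -/
def standardize (G : DGraph C) (XF : Set C) : DGraph C where
  w := G.stdW XF
  refl' := fun a => by
    cases a with
    | none => exact G.refl' none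
    | some x => exact G.refl' (some x)

/-- Intersecting a distance graph with a single atomic constraint `y - x ◁ c`:
the weight of the edge `x → y` is replaced by `min(𝔾_{xy}, (◁, c))`. -/
def addAtom (G : DGraph C) (φ : Atom C) : DGraph C where
  w := fun a b =>
    if a = φ.x ∧ b = φ.y ∧ φ.x ≠ φ.y then
      Weight.min (G.w a b) ⟨φ.cmp, φ.c.toEReal⟩
    else G.w a b
  refl' := fun a => by
    have h : ¬ (a = φ.x ∧ a = φ.y ∧ φ.x ≠ φ.y) := by
      rintro ⟨h1, h2, h3⟩
      exact h3 (h1 ▸ h2 ▸ rfl)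
    show (if a = φ.x ∧ a = φ.y ∧ φ.x ≠ φ.y then
      Weight.min (G.w a a) ⟨φ.cmp, φ.c.toEReal⟩ else G.w a a) = ⟨Cmp.le, ⊤⟩
    rw [if_neg h]
    exact G.refl' a

/-- Intersecting a distance graph with a guard (list of atomic constraints). -/
def guardGraph (G : DGraph C) : List (Atom C) → DGraph C
  | [] => G
  | φ :: g => (G.guardGraph g).addAtom φ

/-- Edgewise minimum of two distance graphs. -/
def minG (G H : DGraph C) : DGraph C where
  w := fun a b => Weight.min (G.w a b) (H.w a b)
  refl' := fun a => by
    show Weight.min (G.w a a) (H.w a a) = _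
    rw [G.refl', H.refl']
    exact ite_self _

end DGraph

/-- The distance graph `𝔾_v^G`. -/
def upGraph (XF : Set C) (G : Set (Atom C)) (v : Val C XF) : DGraph C where
  w := fun a b =>
    match a, b with
    | some x, none =>
        if x ∈ XF then ⟨Cmp.le, -(v.toFun (some x))⟩
        else if ∃ φ ∈ G, φ.y = none ∧ φ.x = some x ∧ φ.c ≠ EConst.ninf ∧ ¬ asat v.toFun φ
          then ⟨Cmp.le, -(v.toFun (some x))⟩
        else ⟨Cmp.le, ⊤⟩
    | none, some y =>
        if y ∈ XF then ⟨Cmp.le, v.toFun (some y)⟩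
        else if ∃ φ ∈ G, φ.y = some y ∧ φ.x = none ∧ φ.c ≠ EConst.pinf ∧ asat v.toFun φ
          then ⟨Cmp.le, v.toFun (some y)⟩
        else ⟨Cmp.le, ⊤⟩
    | _, _ => ⟨Cmp.le, ⊤⟩
  refl' := fun a => by cases a <;> rfl

/-- The guard `g_v^G`: all constraints of `G` satisfied by `v`. -/
def upGuard (G : Set (Atom C)) (u : Option C → EReal) : Set (Atom C) :=
  { φ ∈ G | asat u φ }

/-- An atomic constraint is `M`-bounded. -/
def MBounded (M : ℕ) (φ : Atom C) : Prop :=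
  (∃ k : ℤ, φ.c = EConst.int k ∧ -(M : ℤ) ≤ k ∧ k ≤ (M : ℤ)) ∨
  (φ.cmp = Cmp.le ∧ φ.c = EConst.ninf) ∨ φ.c = EConst.pinf

/-- An atomic constraint is `M`-bounded integral (constant in `{-∞,+∞} ∪ [-M, M] ∩ ℤ`). -/
def MBoundedIntegral (M : ℕ) (φ : Atom C) : Prop :=
  (∃ k : ℤ, φ.c = EConst.int k ∧ -(M : ℤ) ≤ k ∧ k ≤ (M : ℤ)) ∨
  φ.c = EConst.ninf ∨ φ.c = EConst.pinf

/-- An atomic constraint is `X_D`-safe: if both endpoints are future clocks,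
they are in `X_D`. -/
def XDSafe (XF XD : Set C) (φ : Atom C) : Prop :=
  ∀ x y : C, φ.x = some x → φ.y = some y → x ∈ XF → y ∈ XF → x ∈ XD ∧ y ∈ XD

/-- Vertices in `X_F ∪ {0}`. -/
def futV (XF : Set C) : Option C → Prop
  | none => True
  | some x => x ∈ XF

/-- Vertices in `X_H ∪ {0}`. -/
def histV (XF : Set C) : Option C → Prop
  | none => True
  | some x => x ∉ XF

/-- The equivalence `v₁ ≃ v₂`: agreement on history clocks and on all
`(X_D, M)`-safe constraints over `X_F ∪ {0}`. -/
def simeqV (XF XD : Set C) (M : ℕ) (v₁ v₂ : Val C XF) : Prop :=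
  (∀ x : C, x ∉ XF → v₁.toFun (some x) = v₂.toFun (some x)) ∧
  ∀ φ : Atom C, XDSafe XF XD φ → MBounded M φ → futV XF φ.x → futV XF φ.y →
    (asat v₁.toFun φ ↔ asat v₂.toFun φ)

/-- `(X_D, M)`-safely reachable zones: obtained from the initial zone
`↑(𝕍 ∧ g₀)` (`g₀` fixing each history clock to `0` or `+∞`) by the
`(X_D, M)`-safe zone operations. -/
inductive SafeReach (XF XD : Set C) (M : ℕ) : Set (Val C XF) → Prop where
  | init (f : C → EReal) (hf : ∀ x : C, x ∉ XF → f x = 0 ∨ f x = ⊤) :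
      SafeReach XF XD M (elapseSet XF { v | ∀ x : C, x ∉ XF → v.toFun (some x) = f x })
  | guard {Z : Set (Val C XF)} (g : Set (Atom C))
      (hg : ∀ φ ∈ g, XDSafe XF XD φ ∧ MBounded M φ)
      (h : SafeReach XF XD M Z) :
      SafeReach XF XD M { v ∈ Z | ∀ φ ∈ g, asat v.toFun φ }
  | changeSimple {Z : Set (Val C XF)} (x : C) (hx : x ∉ XD) (h : SafeReach XF XD M Z) :
      SafeReach XF XD M (changeSet XF {x} Z)
  | changeD {Z : Set (Val C XF)} (x : C) (hx : x ∈ XD) (c : EReal) (hc : c = 0 ∨ c = ⊥)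
      (h : SafeReach XF XD M Z) :
      SafeReach XF XD M (changeSet XF {x} { v ∈ Z | v.toFun (some x) = c })
  | elapse {Z : Set (Val C XF)} (h : SafeReach XF XD M Z) :
      SafeReach XF XD M (elapseSet XF Z)

/-- `α ∼_K β` on `ℝ̄`. -/
def eqvK (K : ℕ) (α β : EReal) : Prop :=
  ∀ (cmp : Cmp) (c : EReal),
    (c = ⊥ ∨ c = ⊤ ∨ ∃ k : ℤ, c = ((k : ℝ) : EReal) ∧ |k| ≤ (K : ℤ)) →
    (cmp.holds α c ↔ cmp.holds β c)

/-- The equivalence `v ∼ⁿ_M v'` on valuations. -/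
def simVn (XF : Set C) (M n : ℕ) (v v' : Val C XF) : Prop :=
  (∀ x : C, eqvK (n * M) (v.toFun (some x)) (v'.toFun (some x))) ∧
  ∀ x y : C, eqvK ((n + 1) * M)
    (esub (v.toFun (some x)) (v.toFun (some y)))
    (esub (v'.toFun (some x)) (v'.toFun (some y)))

/-- The `(†)` conditions for a distance graph with bound `B` (usually `B = nM`). -/
def Dagger (XF : Set C) (B : ℕ) (G : DGraph C) : Prop :=
  (∀ x ∈ XF, (∃ b : Option C, histV XF b ∧ (G.w (some x) b).Finite) →
     Weight.le ⟨Cmp.le, 0⟩ (G.w (some x) none) ∧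
     Weight.le (G.w (some x) none) ⟨Cmp.le, ((B : ℝ) : EReal)⟩) ∧
  (∀ x ∈ XF, (G.w none (some x)).Finite →
     Weight.le ⟨Cmp.lt, ((-(B : ℝ) : ℝ) : EReal)⟩ (G.w none (some x)) ∧
     Weight.le (G.w none (some x)) ⟨Cmp.le, 0⟩) ∧
  (∀ x : C, x ∉ XF → ∀ y ∈ XF, (G.w none (some y)).Finite →
     Weight.le (Weight.add (G.w (some x) none) ⟨Cmp.lt, ((-(B : ℝ) : ℝ) : EReal)⟩)
       (G.w (some x) (some y))) ∧
  (∀ x ∈ XF, ∀ y ∈ XF, (G.w (some x) (some y)).Finite →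
     Weight.le ⟨Cmp.lt, ((-(B : ℝ) : ℝ) : EReal)⟩ (G.w (some x) (some y)) ∧
     Weight.le (G.w (some x) (some y)) ⟨Cmp.le, ((B : ℝ) : EReal)⟩)

end GTA

namespace GTA



private lemma holds_top_imp {cmp : Cmp} {c : EReal} (h : cmp.holds ⊤ c) :
    cmp = Cmp.le ∧ c = ⊤ := by
  cases cmp
  · exact absurd h (not_top_lt)
  · exact ⟨rfl, top_le_iff.mp h⟩

private lemma esub_top_iff (B A : EReal) : esub B A = ⊤ ↔ B = ⊤ ∨ A = ⊥ := by
  unfold esub eadd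
  split_ifs with h
  · simpa [EReal.neg_eq_top_iff] using h
  · push_neg at h
    constructor
    · intro hs
      exact absurd hs (EReal.add_lt_top h.1 h.2).ne
    · rintro (h1 | h2)
      · exact absurd h1 h.1
      · exact absurd (EReal.neg_eq_top_iff.mpr h2) h.2

private lemma key_weight_sum (cmp1 cmp2 : Cmp) (c1 c2 A B C : EReal)
    (h1 : cmp1.holds (esub B A) c1) (h2 : cmp2.holds (esub C B) c2) :
    (Weight.add ⟨cmp1, c1⟩ ⟨cmp2, c2⟩).cmp.holds (esub C A)
      (Weight.add ⟨cmp1, c1⟩ ⟨cmp2, c2⟩).c := by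
  -- if B = ⊤ then w₁ must be (≤, ⊤)
  have hB1 : B = ⊤ → cmp1 = Cmp.le ∧ c1 = ⊤ := fun h => holds_top_imp (by
    rwa [(esub_top_iff B A).mpr (Or.inl h)] at h1)
  have hA1 : A = ⊥ → cmp1 = Cmp.le ∧ c1 = ⊤ := fun h => holds_top_imp (by
    rwa [(esub_top_iff B A).mpr (Or.inr h)] at h1)
  have hC2 : C = ⊤ → cmp2 = Cmp.le ∧ c2 = ⊤ := fun h => holds_top_imp (by
    rwa [(esub_top_iff C B).mpr (Or.inl h)] at h2)
  have hB2 : B = ⊥ → cmp2 = Cmp.le ∧ c2 = ⊤ := fun h => holds_top_imp (by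
    rwa [(esub_top_iff C B).mpr (Or.inr h)] at h2)
  unfold Weight.add
  split_ifs with hlt hletop hlebot hlttop hle
  · -- result (<, ⊥): impossible hypotheses
    exfalso
    rcases hlt with h | h <;> rw [Weight.mk.injEq] at h
    · rw [h.1, h.2] at h1; exact not_lt_bot h1
    · rw [h.1, h.2] at h2; exact not_lt_bot h2
  · exact le_top
  · -- result (≤, ⊥)
    push_neg at hlt hletop
    simp only [ne_eq, Weight.mk.injEq, not_and_or] at hlt hletop
    show esub C A ≤ ⊥
    rcases hlebot with h | h <;> rw [Weight.mk.injEq] at h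
    · -- w₁ = (≤, ⊥): esub B A = ⊥
      rw [h.1, h.2] at h1
      have hb : esub B A = ⊥ := le_bot_iff.mp h1
      unfold esub eadd at hb
      split_ifs at hb with hc
      · exact absurd hb top_ne_bot
      push_neg at hc
      rcases EReal.add_eq_bot_iff.mp hb with hBb | hAn
      · -- B = ⊥
        rcases hB2 hBb with ⟨e1, e2⟩
        rw [e1, e2] at hletop
        simp at hletop
      · -- A = ⊤
        have hAt : A = ⊤ := EReal.neg_eq_bot_iff.mp hAn
        have hCt : C ≠ ⊤ := by
          intro hC
          rcases hC2 hC with ⟨e1, e2⟩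
          rw [e1, e2] at hletop
          simp at hletop
        have hn : ¬(C = ⊤ ∨ -A = ⊤) := fun h' => h'.elim hCt hc.2
        unfold esub eadd
        rw [if_neg hn, hAt, EReal.neg_top, EReal.add_bot]
    · -- w₂ = (≤, ⊥): esub C B = ⊥
      rw [h.1, h.2] at h2
      have hb : esub C B = ⊥ := le_bot_iff.mp h2
      unfold esub eadd at hb
      split_ifs at hb with hc
      · exact absurd hb top_ne_bot
      push_neg at hc
      rcases EReal.add_eq_bot_iff.mp hb with hCb | hBn
      · -- C = ⊥
        have hAb : A ≠ ⊥ := by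
          intro hA
          rcases hA1 hA with ⟨e1, e2⟩
          rw [e1, e2] at hletop
          simp at hletop
        have hn : ¬(C = ⊤ ∨ -A = ⊤) :=
          fun h' => h'.elim hc.1 fun h'' => hAb (EReal.neg_eq_top_iff.mp h'')
        unfold esub eadd
        rw [if_neg hn, hCb, EReal.bot_add]
      · -- B = ⊤
        have hBt : B = ⊤ := EReal.neg_eq_bot_iff.mp hBn
        rcases hB1 hBt with ⟨e1, e2⟩
        rw [e1, e2] at hletop
        simp at hletop
  · -- result (<, ⊤)
    push_neg at hletop
    simp only [ne_eq, Weight.mk.injEq, not_and_or] at hletop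
    show esub C A < ⊤
    rw [lt_top_iff_ne_top]
    intro ht
    rcases (esub_top_iff C A).mp ht with hC | hA
    · rcases hC2 hC with ⟨e1, e2⟩
      rw [e1, e2] at hletop
      simp at hletop
    · rcases hA1 hA with ⟨e1, e2⟩
      rw [e1, e2] at hletop
      simp at hletop
  · -- finite constants case
    push_neg at hlt hletop hlebot hlttop
    have hc1 : c1 ≠ ⊥ ∧ c1 ≠ ⊤ := by
      constructor <;> intro h <;> cases cmp1
      · exact hlt.1 (by rw [h])
      · exact hlebot.1 (by rw [h])
      · exact hlttop.1 (by rw [h])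
      · exact hletop.1 (by rw [h])
    have hc2 : c2 ≠ ⊥ ∧ c2 ≠ ⊤ := by
      constructor <;> intro h <;> cases cmp2
      · exact hlt.2 (by rw [h])
      · exact hlebot.2 (by rw [h])
      · exact hlttop.2 (by rw [h])
      · exact hletop.2 (by rw [h])
    have hA : A ≠ ⊥ := fun h => hc1.2 (hA1 h).2
    have hB : B ≠ ⊤ := fun h => hc1.2 (hB1 h).2
    have hB' : B ≠ ⊥ := fun h => hc2.2 (hB2 h).2
    have hC : C ≠ ⊤ := fun h => hc2.2 (hC2 h).2
    obtain ⟨r1, rfl⟩ : ∃ r : ℝ, c1 = (r : EReal) := ⟨c1.toReal, (EReal.coe_toReal hc1.2 hc1.1).symm⟩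
    obtain ⟨r2, rfl⟩ : ∃ r : ℝ, c2 = (r : EReal) := ⟨c2.toReal, (EReal.coe_toReal hc2.2 hc2.1).symm⟩
    obtain ⟨rb, rfl⟩ : ∃ r : ℝ, B = (r : EReal) := ⟨B.toReal, (EReal.coe_toReal hB hB').symm⟩
    have hsum : ((r1 : EReal) + (r2 : EReal)) = ((r1 + r2 : ℝ) : EReal) := by
      exact_mod_cast rfl
    by_cases hAt : A = ⊤
    · -- esub C A = ⊥
      have hb : esub C A = ⊥ := by
        have hn : ¬(C = ⊤ ∨ -A = ⊤) := by
          rintro (h' | h')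
          · exact hC h'
          · rw [hAt] at h'; simp at h'
        unfold esub eadd
        rw [if_neg hn, hAt, EReal.neg_top, EReal.add_bot]
      rw [hb, hsum]
      cases cmp1 <;> cases cmp2 <;> simp [Cmp.holds] <;> exact EReal.bot_lt_coe _
    · by_cases hCb : C = ⊥
      · have hb : esub C A = ⊥ := by
          have hn : ¬(C = ⊤ ∨ -A = ⊤) := by
            rintro (h' | h')
            · exact hC h'
            · exact hA (EReal.neg_eq_top_iff.mp h')
          unfold esub eadd
          rw [if_neg hn, hCb, EReal.bot_add]
        rw [hb, hsum]
        cases cmp1 <;> cases cmp2 <;> simp [Cmp.holds] <;> exact EReal.bot_lt_coe _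
      · obtain ⟨ra, rfl⟩ : ∃ r : ℝ, A = (r : EReal) := ⟨A.toReal, (EReal.coe_toReal hAt hA).symm⟩
        obtain ⟨rc, rfl⟩ : ∃ r : ℝ, C = (r : EReal) := ⟨C.toReal, (EReal.coe_toReal hC hCb).symm⟩
        have e1 : esub (rb : EReal) (ra : EReal) = ((rb - ra : ℝ) : EReal) := by
          unfold esub eadd
          split_ifs with h'
          · rcases h' with h' | h' <;> simp [← EReal.coe_neg] at h'
          · rw [sub_eq_add_neg]; push_cast; rfl
        have e2 : esub (rc : EReal) (rb : EReal) = ((rc - rb : ℝ) : EReal) := by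
          unfold esub eadd
          split_ifs with h'
          · rcases h' with h' | h' <;> simp [← EReal.coe_neg] at h'
          · rw [sub_eq_add_neg]; push_cast; rfl
        have e3 : esub (rc : EReal) (ra : EReal) = ((rc - ra : ℝ) : EReal) := by
          unfold esub eadd
          split_ifs with h'
          · rcases h' with h' | h' <;> simp [← EReal.coe_neg] at h'
          · rw [sub_eq_add_neg]; push_cast; rfl
        rw [e1] at h1; rw [e2] at h2
        rw [e3, hsum]
        cases cmp1 <;> cases cmp2 <;>
          simp only [Cmp.holds, EReal.coe_lt_coe_iff, EReal.coe_le_coe_iff] at h1 h2 ⊢ <;>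
          linarith
  · -- finite constants case
    push_neg at hlt hletop hlebot hlttop
    have hc1 : c1 ≠ ⊥ ∧ c1 ≠ ⊤ := by
      constructor <;> intro h <;> cases cmp1
      · exact hlt.1 (by rw [h])
      · exact hlebot.1 (by rw [h])
      · exact hlttop.1 (by rw [h])
      · exact hletop.1 (by rw [h])
    have hc2 : c2 ≠ ⊥ ∧ c2 ≠ ⊤ := by
      constructor <;> intro h <;> cases cmp2
      · exact hlt.2 (by rw [h])
      · exact hlebot.2 (by rw [h])
      · exact hlttop.2 (by rw [h])
      · exact hletop.2 (by rw [h])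
    have hA : A ≠ ⊥ := fun h => hc1.2 (hA1 h).2
    have hB : B ≠ ⊤ := fun h => hc1.2 (hB1 h).2
    have hB' : B ≠ ⊥ := fun h => hc2.2 (hB2 h).2
    have hC : C ≠ ⊤ := fun h => hc2.2 (hC2 h).2
    obtain ⟨r1, rfl⟩ : ∃ r : ℝ, c1 = (r : EReal) := ⟨c1.toReal, (EReal.coe_toReal hc1.2 hc1.1).symm⟩
    obtain ⟨r2, rfl⟩ : ∃ r : ℝ, c2 = (r : EReal) := ⟨c2.toReal, (EReal.coe_toReal hc2.2 hc2.1).symm⟩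
    obtain ⟨rb, rfl⟩ : ∃ r : ℝ, B = (r : EReal) := ⟨B.toReal, (EReal.coe_toReal hB hB').symm⟩
    have hsum : ((r1 : EReal) + (r2 : EReal)) = ((r1 + r2 : ℝ) : EReal) := by
      exact_mod_cast rfl
    by_cases hAt : A = ⊤
    · -- esub C A = ⊥
      have hb : esub C A = ⊥ := by
        have hn : ¬(C = ⊤ ∨ -A = ⊤) := by
          rintro (h' | h')
          · exact hC h'
          · rw [hAt] at h'; simp at h'
        unfold esub eadd
        rw [if_neg hn, hAt, EReal.neg_top, EReal.add_bot]
      rw [hb, hsum]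
      cases cmp1 <;> cases cmp2 <;> simp [Cmp.holds] <;> exact EReal.bot_lt_coe _
    · by_cases hCb : C = ⊥
      · have hb : esub C A = ⊥ := by
          have hn : ¬(C = ⊤ ∨ -A = ⊤) := by
            rintro (h' | h')
            · exact hC h'
            · exact hA (EReal.neg_eq_top_iff.mp h')
          unfold esub eadd
          rw [if_neg hn, hCb, EReal.bot_add]
        rw [hb, hsum]
        cases cmp1 <;> cases cmp2 <;> simp [Cmp.holds] <;> exact EReal.bot_lt_coe _
      · obtain ⟨ra, rfl⟩ : ∃ r : ℝ, A = (r : EReal) := ⟨A.toReal, (EReal.coe_toReal hAt hA).symm⟩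
        obtain ⟨rc, rfl⟩ : ∃ r : ℝ, C = (r : EReal) := ⟨C.toReal, (EReal.coe_toReal hC hCb).symm⟩
        have e1 : esub (rb : EReal) (ra : EReal) = ((rb - ra : ℝ) : EReal) := by
          unfold esub eadd
          split_ifs with h'
          · rcases h' with h' | h' <;> simp [← EReal.coe_neg] at h'
          · rw [sub_eq_add_neg]; push_cast; rfl
        have e2 : esub (rc : EReal) (rb : EReal) = ((rc - rb : ℝ) : EReal) := by
          unfold esub eadd
          split_ifs with h'
          · rcases h' with h' | h' <;> simp [← EReal.coe_neg] at h'
          · rw [sub_eq_add_neg]; push_cast; rfl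
        have e3 : esub (rc : EReal) (ra : EReal) = ((rc - ra : ℝ) : EReal) := by
          unfold esub eadd
          split_ifs with h'
          · rcases h' with h' | h' <;> simp [← EReal.coe_neg] at h'
          · rw [sub_eq_add_neg]; push_cast; rfl
        rw [e1] at h1; rw [e2] at h2
        rw [e3, hsum]
        cases cmp1 <;> cases cmp2 <;>
          simp only [Cmp.holds, EReal.coe_lt_coe_iff, EReal.coe_le_coe_iff] at h1 h2 ⊢
        · linarith
        · linarith
        · linarith
        · exact absurd ⟨rfl, rfl⟩ hle

/-- soundness of the sum of weights: if `v ⊨ y - x ◁₁ c₁` and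
`v ⊨ z - y ◁₂ c₂` then `v ⊨ z - x ◁ c` where `(◁,c) = (◁₁,c₁) + (◁₂,c₂)`. -/
theorem weight_sum_sound {C : Type*} [Finite C] (XF : Set C) (a b c : Option C)
    (w₁ w₂ : Weight) (v : Val C XF)
    (h₁ : w₁.cmp.holds (esub (v.toFun b) (v.toFun a)) w₁.c)
    (h₂ : w₂.cmp.holds (esub (v.toFun c) (v.toFun b)) w₂.c) :
    (Weight.add w₁ w₂).cmp.holds (esub (v.toFun c) (v.toFun a))
      (Weight.add w₁ w₂).c := by
  exact key_weight_sum w₁.cmp w₂.cmp w₁.c w₂.c _ _ _ h₁ h₂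

end GTA
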